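/- Let n be an even integer, n ≥ 4. Every family Q of 3-element subsets of [n] that determines a non-minority ball satisfies 8·|Q| ≥ C(n−2,3), i.e., |Q| ≥ (1/8)·binomial(n−2,3). -/

import Mathlib

/-- `b` is a majority ball of `A` under coloring `c`:
strictly more than `|A|/2` balls of `A` have color `c b`. -/
def majBall {n : ℕ} (c : Fin n → Bool) (A : Finset (Fin n)) (b : Fin n) : Prop :=
  b ∈ A ∧ A.card < 2 * (A.filter fun x => c x = c b).card

/-- `b` is a non-minority ball of `A` under coloring `c`:
at least `|A|/2` balls of `A` have color `c b`. -/
def nonMinBall {n : ℕ} (c : Fin n → Bool) (A : Finset (Fin n)) (b : Fin n) : Prop :=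
  b ∈ A ∧ A.card ≤ 2 * (A.filter fun x => c x = c b).card

/-- A coloring `c` is legal for the answer function `a` on the query set `Q`. -/
def Legal {n : ℕ} (Q : Finset (Finset (Fin n))) (a : Finset (Fin n) → Fin n)
    (c : Fin n → Bool) : Prop :=
  ∀ T ∈ Q, majBall c T (a T)

/-- The query set `Q` determines a non-minority ball. -/
def Determines {n : ℕ} (Q : Finset (Finset (Fin n))) : Prop :=
  ∀ a : Finset (Fin n) → Fin n, (∀ T ∈ Q, a T ∈ T) → (∃ c, Legal Q a c) →
    ∃ b : Fin n, ∀ c : Fin n → Bool, Legal Q a c → nonMinBall c Finset.univ b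

/-- Co-degree: the number of queries of `Q` containing both `x` and `y`. -/
def codeg {n : ℕ} (Q : Finset (Finset (Fin n))) (x y : Fin n) : ℕ :=
  (Q.filter fun T => x ∈ T ∧ y ∈ T).card

namespace Stmt6Aux

open Finset

variable {n : ℕ}

/-- First adversary coloring: `true` outside `B`. -/
def cc1 (B : Finset (Fin n)) : Fin n → Bool := fun w => decide (w ∉ B)

/-- Second adversary coloring: `true` on `B ∪ {u,v}`. -/
def cc2 (u v : Fin n) (B : Finset (Fin n)) : Fin n → Bool :=
  fun w => decide (w ∈ B ∨ w = u ∨ w = v)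

/-- Third adversary coloring: `true` outside `B ∪ {p1,p2}`. -/
def cc3 (p1 p2 : Fin n) (B : Finset (Fin n)) : Fin n → Bool :=
  fun w => decide (w ∉ B ∧ w ≠ p1 ∧ w ≠ p2)

/-- `t` is a simultaneously-safe answer ball for query `T`. -/
def Good (u v p1 p2 : Fin n) (B : Finset (Fin n)) (t : Fin n) (T : Finset (Fin n)) : Prop :=
  t ∈ T ∧ (∃ o ∈ T, o ≠ t ∧ cc1 B o = cc1 B t) ∧
    (∃ o ∈ T, o ≠ t ∧ cc2 u v B o = cc2 u v B t) ∧
    (∃ o ∈ T, o ≠ t ∧ cc3 p1 p2 B o = cc3 p1 p2 B t)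

def prof (u v p1 p2 : Fin n) (B : Finset (Fin n)) (w : Fin n) : Bool × Bool × Bool :=
  (cc1 B w, cc2 u v B w, cc3 p1 p2 B w)

/-- the first profile has, in each coordinate, a companion among the other two. -/
def OK1 (a b c : Bool × Bool × Bool) : Prop :=
  (a.1 = b.1 ∨ a.1 = c.1) ∧ (a.2.1 = b.2.1 ∨ a.2.1 = c.2.1) ∧ (a.2.2 = b.2.2 ∨ a.2.2 = c.2.2)

def ProfOK (a b c : Bool × Bool × Bool) : Prop := OK1 a b c ∨ OK1 b a c ∨ OK1 c a b

instance (a b c : Bool × Bool × Bool) : Decidable (OK1 a b c) := by unfold OK1; infer_instance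

instance (a b c : Bool × Bool × Bool) : Decidable (ProfOK a b c) := by unfold ProfOK; infer_instance

lemma good_of_ok {u v p1 p2 : Fin n} {B : Finset (Fin n)} {x y z : Fin n}
    {px py pz : Bool × Bool × Bool}
    (hxy : x ≠ y) (hxz : x ≠ z) (hyz : y ≠ z)
    (hpx : prof u v p1 p2 B x = px) (hpy : prof u v p1 p2 B y = py)
    (hpz : prof u v p1 p2 B z = pz) (h : ProfOK px py pz) :
    ∃ t, Good u v p1 p2 B t {x, y, z} := by
  obtain ⟨px1, px2, px3⟩ := px
  obtain ⟨py1, py2, py3⟩ := py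
  obtain ⟨pz1, pz2, pz3⟩ := pz
  simp only [prof, Prod.mk.injEq] at hpx hpy hpz
  obtain ⟨hx1, hx2, hx3⟩ := hpx
  obtain ⟨hy1, hy2, hy3⟩ := hpy
  obtain ⟨hz1, hz2, hz3⟩ := hpz
  rcases h with ⟨ha, hb, hc⟩ | ⟨ha, hb, hc⟩ | ⟨ha, hb, hc⟩
  · refine ⟨x, by simp, ?_, ?_, ?_⟩
    · rcases ha with h' | h'
      · exact ⟨y, by simp, hxy.symm, by rw [hy1, hx1]; exact h'.symm⟩
      · exact ⟨z, by simp, hxz.symm, by rw [hz1, hx1]; exact h'.symm⟩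
    · rcases hb with h' | h'
      · exact ⟨y, by simp, hxy.symm, by rw [hy2, hx2]; exact h'.symm⟩
      · exact ⟨z, by simp, hxz.symm, by rw [hz2, hx2]; exact h'.symm⟩
    · rcases hc with h' | h'
      · exact ⟨y, by simp, hxy.symm, by rw [hy3, hx3]; exact h'.symm⟩
      · exact ⟨z, by simp, hxz.symm, by rw [hz3, hx3]; exact h'.symm⟩
  · refine ⟨y, by simp, ?_, ?_, ?_⟩
    · rcases ha with h' | h'
      · exact ⟨x, by simp, hxy, by rw [hx1, hy1]; exact h'.symm⟩
      · exact ⟨z, by simp, hyz.symm, by rw [hz1, hy1]; exact h'.symm⟩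
    · rcases hb with h' | h'
      · exact ⟨x, by simp, hxy, by rw [hx2, hy2]; exact h'.symm⟩
      · exact ⟨z, by simp, hyz.symm, by rw [hz2, hy2]; exact h'.symm⟩
    · rcases hc with h' | h'
      · exact ⟨x, by simp, hxy, by rw [hx3, hy3]; exact h'.symm⟩
      · exact ⟨z, by simp, hyz.symm, by rw [hz3, hy3]; exact h'.symm⟩
  · refine ⟨z, by simp, ?_, ?_, ?_⟩
    · rcases ha with h' | h'
      · exact ⟨x, by simp, hxz, by rw [hx1, hz1]; exact h'.symm⟩
      · exact ⟨y, by simp, hyz, by rw [hy1, hz1]; exact h'.symm⟩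
    · rcases hb with h' | h'
      · exact ⟨x, by simp, hxz, by rw [hx2, hz2]; exact h'.symm⟩
      · exact ⟨y, by simp, hyz, by rw [hy2, hz2]; exact h'.symm⟩
    · rcases hc with h' | h'
      · exact ⟨x, by simp, hxz, by rw [hx3, hz3]; exact h'.symm⟩
      · exact ⟨y, by simp, hyz, by rw [hy3, hz3]; exact h'.symm⟩

lemma maj_helper {c : Fin n → Bool} {T : Finset (Fin n)} {t : Fin n}
    (h3 : T.card = 3) (ht : t ∈ T) (o : Fin n) (hoT : o ∈ T) (hot : o ≠ t)
    (hoe : c o = c t) : majBall c T t := by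
  refine ⟨ht, ?_⟩
  have hsub : ({o, t} : Finset (Fin n)) ⊆ T.filter (fun x => c x = c t) := by
    intro w hw
    rcases Finset.mem_insert.mp hw with rfl | hw
    · exact Finset.mem_filter.mpr ⟨hoT, hoe⟩
    · rcases Finset.mem_singleton.mp hw with rfl
      exact Finset.mem_filter.mpr ⟨ht, rfl⟩
  have h2 : 2 ≤ (T.filter (fun x => c x = c t)).card := by
    have := Finset.card_le_card hsub
    rwa [Finset.card_pair hot] at this
  omega

lemma third_eq {a c b b' : Fin n} (h : ({a, c, b} : Finset (Fin n)) = {a, c, b'})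
    (h1 : b ≠ a) (h2 : b ≠ c) : b = b' := by
  have hb : b ∈ ({a, c, b'} : Finset (Fin n)) := by rw [← h]; simp
  simp only [Finset.mem_insert, Finset.mem_singleton] at hb
  tauto

set_option maxHeartbeats 2000000 in
/-- The adversary lemma: a pair `u,v`, a pair `p1,p2` and a set `B` of size `m-1`
with no query `{d,p,b}` (`d ∈ {u,v}`, `p ∈ {p1,p2}`, `b ∈ B`) defeat `Q`. -/
lemma adversary (m : ℕ) (hm : n = m + m) (Q : Finset (Finset (Fin n)))
    (hQ3 : ∀ T ∈ Q, T.card = 3) (u v p1 p2 : Fin n)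
    (huv : u ≠ v) (hup1 : u ≠ p1) (hup2 : u ≠ p2) (hvp1 : v ≠ p1) (hvp2 : v ≠ p2)
    (hp12 : p1 ≠ p2) (B : Finset (Fin n)) (hB : B.card = m - 1)
    (hBu : u ∉ B) (hBv : v ∉ B) (hBp1 : p1 ∉ B) (hBp2 : p2 ∉ B)
    (hnoQ : ∀ b ∈ B, ({u, p1, b} : Finset (Fin n)) ∉ Q ∧ ({u, p2, b} : Finset (Fin n)) ∉ Q ∧
      ({v, p1, b} : Finset (Fin n)) ∉ Q ∧ ({v, p2, b} : Finset (Fin n)) ∉ Q)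
    (hdet : Determines Q) : False := by
  classical
  -- every query admits a simultaneously-safe answer ball
  have badQ : ∀ (d p b : Fin n), (d = u ∨ d = v) → (p = p1 ∨ p = p2) → b ∈ B →
      ({d, p, b} : Finset (Fin n)) ∈ Q → False := by
    intro d p b hd hp hb hmem
    obtain ⟨h1, h2, h3, h4⟩ := hnoQ b hb
    rcases hd with rfl | rfl <;> rcases hp with rfl | rfl <;> contradiction
  have hcat : ∀ w : Fin n,
      (w ∈ B ∧ prof u v p1 p2 B w = (false, true, false)) ∨
      ((w = u ∨ w = v) ∧ prof u v p1 p2 B w = (true, true, true)) ∨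
      ((w = p1 ∨ w = p2) ∧ prof u v p1 p2 B w = (true, false, false)) ∨
      prof u v p1 p2 B w = (true, false, true) := by
    intro w
    by_cases h1 : w ∈ B
    · exact Or.inl ⟨h1, by simp [prof, cc1, cc2, cc3, h1]⟩
    by_cases h2 : w = u
    · subst h2
      exact Or.inr (Or.inl ⟨Or.inl rfl, by simp [prof, cc1, cc2, cc3, hBu, hup1, hup2]⟩)
    by_cases h3 : w = v
    · subst h3
      exact Or.inr (Or.inl ⟨Or.inr rfl, by simp [prof, cc1, cc2, cc3, hBv, hvp1, hvp2]⟩)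
    by_cases h4 : w = p1
    · subst h4
      exact Or.inr (Or.inr (Or.inl ⟨Or.inl rfl,
        by simp [prof, cc1, cc2, cc3, hBp1, Ne.symm hup1, Ne.symm hvp1, hp12]⟩))
    by_cases h5 : w = p2
    · subst h5
      exact Or.inr (Or.inr (Or.inl ⟨Or.inr rfl,
        by simp [prof, cc1, cc2, cc3, hBp2, Ne.symm hup2, Ne.symm hvp2, Ne.symm hp12]⟩))
    · exact Or.inr (Or.inr (Or.inr (by simp [prof, cc1, cc2, cc3, h1, h2, h3, h4, h5])))
  have hEx : ∀ T ∈ Q, ∃ t, Good u v p1 p2 B t T := by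
    intro T hT
    obtain ⟨x, y, z, hxy, hxz, hyz, rfl⟩ := Finset.card_eq_three.mp (hQ3 T hT)
    have hTxzy : ({x, z, y} : Finset (Fin n)) ∈ Q := by
      rwa [show ({x, z, y} : Finset (Fin n)) = {x, y, z} from by ext w; simp; try tauto]
    have hTyxz : ({y, x, z} : Finset (Fin n)) ∈ Q := by
      rwa [show ({y, x, z} : Finset (Fin n)) = {x, y, z} from by ext w; simp; try tauto]
    have hTyzx : ({y, z, x} : Finset (Fin n)) ∈ Q := by
      rwa [show ({y, z, x} : Finset (Fin n)) = {x, y, z} from by ext w; simp; try tauto]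
    have hTzxy : ({z, x, y} : Finset (Fin n)) ∈ Q := by
      rwa [show ({z, x, y} : Finset (Fin n)) = {x, y, z} from by ext w; simp; try tauto]
    have hTzyx : ({z, y, x} : Finset (Fin n)) ∈ Q := by
      rwa [show ({z, y, x} : Finset (Fin n)) = {x, y, z} from by ext w; simp; try tauto]
    rcases hcat x with ⟨hxB, hpx⟩ | ⟨hxD, hpx⟩ | ⟨hxP, hpx⟩ | hpx <;>
      rcases hcat y with ⟨hyB, hpy⟩ | ⟨hyD, hpy⟩ | ⟨hyP, hpy⟩ | hpy <;>
      rcases hcat z with ⟨hzB, hpz⟩ | ⟨hzD, hpz⟩ | ⟨hzP, hpz⟩ | hpz <;>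
      first
      | exact good_of_ok hxy hxz hyz hpx hpy hpz (by decide)
      | exact (badQ x y z hxD hyP hzB hT).elim
      | exact (badQ x z y hxD hzP hyB hTxzy).elim
      | exact (badQ y x z hyD hxP hzB hTyxz).elim
      | exact (badQ y z x hyD hzP hxB hTyzx).elim
      | exact (badQ z x y hzD hxP hyB hTzxy).elim
      | exact (badQ z y x hzD hyP hxB hTzyx).elim
  -- the answer function
  let a : Finset (Fin n) → Fin n := fun T =>
    if h : ∃ t, Good u v p1 p2 B t T then h.choose else u
  have haGood : ∀ T ∈ Q, Good u v p1 p2 B (a T) T := by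
    intro T hT
    have hE := hEx T hT
    show Good u v p1 p2 B (dite _ _ _) T
    rw [dif_pos hE]
    exact hE.choose_spec
  have legal1 : Legal Q a (cc1 B) := by
    intro T hT
    obtain ⟨ht, ⟨o, hoT, hot, hoe⟩, _, _⟩ := haGood T hT
    exact maj_helper (hQ3 T hT) ht o hoT hot hoe
  have legal2 : Legal Q a (cc2 u v B) := by
    intro T hT
    obtain ⟨ht, _, ⟨o, hoT, hot, hoe⟩, _⟩ := haGood T hT
    exact maj_helper (hQ3 T hT) ht o hoT hot hoe
  have legal3 : Legal Q a (cc3 p1 p2 B) := by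
    intro T hT
    obtain ⟨ht, _, _, ⟨o, hoT, hot, hoe⟩⟩ := haGood T hT
    exact maj_helper (hQ3 T hT) ht o hoT hot hoe
  obtain ⟨b, hb⟩ := hdet a (fun T hT => (haGood T hT).1) ⟨cc1 B, legal1⟩
  have hn0 : 0 < n := by have := b.isLt; omega
  have hm1 : 1 ≤ m := by omega
  by_cases hbB : b ∈ B
  · obtain ⟨-, hle⟩ := hb (cc1 B) legal1
    have hcb : cc1 B b = false := by simp [cc1, hbB]
    have hfe : Finset.univ.filter (fun x => cc1 B x = cc1 B b) = B := by
      rw [hcb]; ext w; simp [cc1]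
    rw [hfe, hB, Finset.card_univ, Fintype.card_fin] at hle
    omega
  by_cases hbp : b = p1 ∨ b = p2
  · obtain ⟨-, hle⟩ := hb (cc2 u v B) legal2
    have hcb : cc2 u v B b = false := by
      rcases hbp with rfl | rfl
      · simp [cc2, hBp1, Ne.symm hup1, Ne.symm hvp1]
      · simp [cc2, hBp2, Ne.symm hup2, Ne.symm hvp2]
    have hfe : Finset.univ.filter (fun x => cc2 u v B x = cc2 u v B b)
        = ((Finset.univ \ B).erase u).erase v := by
      rw [hcb]; ext w
      simp only [Finset.mem_filter, Finset.mem_univ, true_and, Finset.mem_erase,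
        Finset.mem_sdiff, cc2, decide_eq_false_iff_not]
      tauto
    have hcard : (((Finset.univ \ B).erase u).erase v).card = n - (m - 1) - 2 := by
      rw [Finset.card_erase_of_mem, Finset.card_erase_of_mem, Finset.card_sdiff_of_subset
        (Finset.subset_univ B), hB, Finset.card_univ, Fintype.card_fin]
      · omega
      · exact Finset.mem_sdiff.mpr ⟨Finset.mem_univ u, hBu⟩
      · exact Finset.mem_erase.mpr ⟨huv.symm, Finset.mem_sdiff.mpr ⟨Finset.mem_univ v, hBv⟩⟩
    rw [hfe, hcard, Finset.card_univ, Fintype.card_fin] at hle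
    omega
  · obtain ⟨-, hle⟩ := hb (cc3 p1 p2 B) legal3
    push_neg at hbp
    have hcb : cc3 p1 p2 B b = true := by simp [cc3, hbB, hbp.1, hbp.2]
    have hfe : Finset.univ.filter (fun x => cc3 p1 p2 B x = cc3 p1 p2 B b)
        = ((Finset.univ \ B).erase p1).erase p2 := by
      rw [hcb]; ext w
      simp only [Finset.mem_filter, Finset.mem_univ, true_and, Finset.mem_erase,
        Finset.mem_sdiff, cc3, decide_eq_true_eq]
      tauto
    have hcard : (((Finset.univ \ B).erase p1).erase p2).card = n - (m - 1) - 2 := by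
      rw [Finset.card_erase_of_mem, Finset.card_erase_of_mem, Finset.card_sdiff_of_subset
        (Finset.subset_univ B), hB, Finset.card_univ, Fintype.card_fin]
      · omega
      · exact Finset.mem_sdiff.mpr ⟨Finset.mem_univ p1, hBp1⟩
      · exact Finset.mem_erase.mpr ⟨hp12.symm, Finset.mem_sdiff.mpr ⟨Finset.mem_univ p2, hBp2⟩⟩
    rw [hfe, hcard, Finset.card_univ, Fintype.card_fin] at hle
    omega


section Counting

variable {n : ℕ}

/-- `b` is joined to the quadruple `(u,v,p1,p2)` by a query. -/
def DJ (Q : Finset (Finset (Fin n))) (u v p1 p2 b : Fin n) : Prop :=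
  ({u, p1, b} : Finset (Fin n)) ∈ Q ∨ ({u, p2, b} : Finset (Fin n)) ∈ Q ∨
    ({v, p1, b} : Finset (Fin n)) ∈ Q ∨ ({v, p2, b} : Finset (Fin n)) ∈ Q

/-- all five balls are pairwise distinct. -/
def Dst (u v p1 p2 b : Fin n) : Prop :=
  (u ≠ v ∧ u ≠ p1 ∧ u ≠ p2 ∧ v ≠ p1 ∧ v ≠ p2 ∧ p1 ≠ p2) ∧
    (b ≠ u ∧ b ≠ v ∧ b ≠ p1 ∧ b ≠ p2)

instance (Q : Finset (Finset (Fin n))) (u v p1 p2 b : Fin n) :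
    Decidable (DJ Q u v p1 p2 b) := by unfold DJ; infer_instance

instance (u v p1 p2 b : Fin n) : Decidable (Dst u v p1 p2 b) := by unfold Dst; infer_instance

def AdjS (Q : Finset (Finset (Fin n))) (u v p1 p2 : Fin n) : Finset (Fin n) :=
  Finset.univ.filter (fun b => Dst u v p1 p2 b ∧ DJ Q u v p1 p2 b)

def WS (T : Finset (Fin n)) (u v p1 p2 : Fin n) : Finset (Fin n) :=
  Finset.univ.filter (fun b => Dst u v p1 p2 b ∧
    (({u, p1, b} : Finset (Fin n)) = T ∨ ({u, p2, b} : Finset (Fin n)) = T ∨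
      ({v, p1, b} : Finset (Fin n)) = T ∨ ({v, p2, b} : Finset (Fin n)) = T))

def KT (T : Finset (Fin n)) : Finset (Fin n × Fin n × Fin n × Fin n × Fin n) :=
  Finset.univ.filter (fun q => Dst q.1 q.2.1 q.2.2.1 q.2.2.2.1 q.2.2.2.2 ∧
    (({q.1, q.2.2.1, q.2.2.2.2} : Finset (Fin n)) = T ∨
      ({q.1, q.2.2.2.1, q.2.2.2.2} : Finset (Fin n)) = T ∨
      ({q.2.1, q.2.2.1, q.2.2.2.2} : Finset (Fin n)) = T ∨
      ({q.2.1, q.2.2.2.1, q.2.2.2.2} : Finset (Fin n)) = T))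

lemma AdjS_le_sum_WS (Q : Finset (Finset (Fin n))) (u v p1 p2 : Fin n) :
    (AdjS Q u v p1 p2).card ≤ ∑ T ∈ Q, (WS T u v p1 p2).card := by
  classical
  refine le_trans (Finset.card_le_card ?_) Finset.card_biUnion_le
  intro b hb
  simp only [AdjS, Finset.mem_filter, Finset.mem_univ, true_and] at hb
  obtain ⟨hd, hdj⟩ := hb
  rcases hdj with h | h | h | h
  · exact Finset.mem_biUnion.mpr ⟨_, h, Finset.mem_filter.mpr
      ⟨Finset.mem_univ b, hd, Or.inl rfl⟩⟩
  · exact Finset.mem_biUnion.mpr ⟨_, h, Finset.mem_filter.mpr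
      ⟨Finset.mem_univ b, hd, Or.inr (Or.inl rfl)⟩⟩
  · exact Finset.mem_biUnion.mpr ⟨_, h, Finset.mem_filter.mpr
      ⟨Finset.mem_univ b, hd, Or.inr (Or.inr (Or.inl rfl))⟩⟩
  · exact Finset.mem_biUnion.mpr ⟨_, h, Finset.mem_filter.mpr
      ⟨Finset.mem_univ b, hd, Or.inr (Or.inr (Or.inr rfl))⟩⟩

lemma sum_WS_eq_card_KT (T : Finset (Fin n)) :
    (∑ u : Fin n, ∑ v : Fin n, ∑ p1 : Fin n, ∑ p2 : Fin n, (WS T u v p1 p2).card)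
      = (KT T).card := by
  simp only [WS, KT, Finset.card_filter, Fintype.sum_prod_type]

lemma third_eq' {a c b b' : Fin n} (h : ({a, c, b} : Finset (Fin n)) = {a, c, b'})
    (h1 : b ≠ a) (h2 : b ≠ c) : b = b' := by
  have hb : b ∈ ({a, c, b'} : Finset (Fin n)) := by rw [← h]; simp
  simp only [Finset.mem_insert, Finset.mem_singleton] at hb
  tauto

set_option maxHeartbeats 1000000 in
lemma KT_bound (h4 : 4 ≤ n) (T : Finset (Fin n)) (hT3 : T.card = 3) :
    (KT T).card ≤ 24 * ((n - 3) * (n - 4)) := by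
  classical
  have hmain : (KT T).card ≤ (((T.offDiag ×ˢ (Finset.univ \ T).offDiag) ×ˢ
      (Finset.univ : Finset (Bool × Bool)))).card := by
    apply Finset.card_le_card_of_injOn (fun q =>
      if ({q.1, q.2.2.1, q.2.2.2.2} : Finset (Fin n)) = T then
        (((q.1, q.2.2.1), (q.2.1, q.2.2.2.1)), (false, false))
      else if ({q.1, q.2.2.2.1, q.2.2.2.2} : Finset (Fin n)) = T then
        (((q.1, q.2.2.2.1), (q.2.1, q.2.2.1)), (false, true))
      else if ({q.2.1, q.2.2.1, q.2.2.2.2} : Finset (Fin n)) = T then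
        (((q.2.1, q.2.2.1), (q.1, q.2.2.2.1)), (true, false))
      else (((q.2.1, q.2.2.2.1), (q.1, q.2.2.1)), (true, true)))
    · rintro ⟨u, v, p1, p2, b⟩ hq
      simp only [KT, Finset.mem_coe, Finset.mem_filter, Finset.mem_univ, true_and] at hq
      obtain ⟨⟨⟨huv, hup1, hup2, hvp1, hvp2, hp12⟩, hbu, hbv, hbp1, hbp2⟩, hdisj⟩ := hq
      simp only [Finset.mem_coe]
      split_ifs with h1 h2 h3
      · refine Finset.mem_product.mpr ⟨Finset.mem_product.mpr
          ⟨Finset.mem_offDiag.mpr ⟨?_, ?_, hup1⟩,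
           Finset.mem_offDiag.mpr ⟨Finset.mem_sdiff.mpr ⟨Finset.mem_univ _, ?_⟩,
             Finset.mem_sdiff.mpr ⟨Finset.mem_univ _, ?_⟩, hvp2⟩⟩, Finset.mem_univ _⟩
        · rw [← h1]; simp
        · rw [← h1]; simp
        · rw [← h1]; simp only [Finset.mem_insert, Finset.mem_singleton]
          push_neg; exact ⟨huv.symm, hvp1, hbv.symm⟩
        · rw [← h1]; simp only [Finset.mem_insert, Finset.mem_singleton]
          push_neg; exact ⟨hup2.symm, hp12.symm, hbp2.symm⟩
      · refine Finset.mem_product.mpr ⟨Finset.mem_product.mpr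
          ⟨Finset.mem_offDiag.mpr ⟨?_, ?_, hup2⟩,
           Finset.mem_offDiag.mpr ⟨Finset.mem_sdiff.mpr ⟨Finset.mem_univ _, ?_⟩,
             Finset.mem_sdiff.mpr ⟨Finset.mem_univ _, ?_⟩, hvp1⟩⟩, Finset.mem_univ _⟩
        · rw [← h2]; simp
        · rw [← h2]; simp
        · rw [← h2]; simp only [Finset.mem_insert, Finset.mem_singleton]
          push_neg; exact ⟨huv.symm, hvp2, hbv.symm⟩
        · rw [← h2]; simp only [Finset.mem_insert, Finset.mem_singleton]
          push_neg; exact ⟨hup1.symm, hp12, hbp1.symm⟩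
      · refine Finset.mem_product.mpr ⟨Finset.mem_product.mpr
          ⟨Finset.mem_offDiag.mpr ⟨?_, ?_, hvp1⟩,
           Finset.mem_offDiag.mpr ⟨Finset.mem_sdiff.mpr ⟨Finset.mem_univ _, ?_⟩,
             Finset.mem_sdiff.mpr ⟨Finset.mem_univ _, ?_⟩, hup2⟩⟩, Finset.mem_univ _⟩
        · rw [← h3]; simp
        · rw [← h3]; simp
        · rw [← h3]; simp only [Finset.mem_insert, Finset.mem_singleton]
          push_neg; exact ⟨huv, hup1, hbu.symm⟩
        · rw [← h3]; simp only [Finset.mem_insert, Finset.mem_singleton]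
          push_neg; exact ⟨hvp2.symm, hp12.symm, hbp2.symm⟩
      · have h4d : ({v, p2, b} : Finset (Fin n)) = T := by tauto
        refine Finset.mem_product.mpr ⟨Finset.mem_product.mpr
          ⟨Finset.mem_offDiag.mpr ⟨?_, ?_, hvp2⟩,
           Finset.mem_offDiag.mpr ⟨Finset.mem_sdiff.mpr ⟨Finset.mem_univ _, ?_⟩,
             Finset.mem_sdiff.mpr ⟨Finset.mem_univ _, ?_⟩, hup1⟩⟩, Finset.mem_univ _⟩
        · rw [← h4d]; simp
        · rw [← h4d]; simp
        · rw [← h4d]; simp only [Finset.mem_insert, Finset.mem_singleton]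
          push_neg; exact ⟨huv, hup2, hbu.symm⟩
        · rw [← h4d]; simp only [Finset.mem_insert, Finset.mem_singleton]
          push_neg; exact ⟨hvp1.symm, hp12, hbp1.symm⟩
    · rintro ⟨u, v, p1, p2, b⟩ hq ⟨u2, v2, p12, p22, b2⟩ hq2 heq
      simp only [KT, Finset.coe_filter, Set.mem_setOf_eq, Finset.mem_univ, true_and] at hq hq2
      obtain ⟨⟨⟨huv, hup1, hup2, hvp1, hvp2, hp12⟩, hbu, hbv, hbp1, hbp2⟩, hdisj⟩ := hq
      obtain ⟨⟨⟨huv2, hup12, hup22, hvp12, hvp22, hp122⟩, hbu2, hbv2, hbp12, hbp22⟩, hdisj2⟩ := hq2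
      dsimp only at heq
      split_ifs at heq <;>
        simp only [Prod.mk.injEq, Bool.false_eq_true, Bool.true_eq_false, and_true, true_and,
          and_false, false_and] at heq
      · obtain ⟨⟨e1, e2⟩, e3, e4⟩ := heq
        subst e1; subst e2; subst e3; subst e4
        have hA : ({u, p1, b} : Finset (Fin n)) = T := by assumption
        have hB : ({u, p1, b2} : Finset (Fin n)) = T := by assumption
        have := third_eq' (hA.trans hB.symm) hbu hbp1
        subst this; rfl
      · obtain ⟨⟨e1, e2⟩, e3, e4⟩ := heq
        subst e1; subst e2; subst e3; subst e4
        have hA : ({u, p2, b} : Finset (Fin n)) = T := by assumption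
        have hB : ({u, p2, b2} : Finset (Fin n)) = T := by assumption
        have := third_eq' (hA.trans hB.symm) hbu hbp2
        subst this; rfl
      · obtain ⟨⟨e1, e2⟩, e3, e4⟩ := heq
        subst e1; subst e2; subst e3; subst e4
        have hA : ({v, p1, b} : Finset (Fin n)) = T := by assumption
        have hB : ({v, p1, b2} : Finset (Fin n)) = T := by assumption
        have := third_eq' (hA.trans hB.symm) hbv hbp1
        subst this; rfl
      · obtain ⟨⟨e1, e2⟩, e3, e4⟩ := heq
        subst e1; subst e2; subst e3; subst e4
        have hA : ({v, p2, b} : Finset (Fin n)) = T := by tauto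
        have hB : ({v, p2, b2} : Finset (Fin n)) = T := by tauto
        have := third_eq' (hA.trans hB.symm) hbv hbp2
        subst this; rfl
  refine le_trans hmain (le_of_eq ?_)
  rw [Finset.card_product, Finset.card_product, Finset.offDiag_card, Finset.offDiag_card,
    Finset.card_sdiff_of_subset (Finset.subset_univ T), hT3, Finset.card_univ, Fintype.card_fin,
    Finset.card_univ]
  have hBB : Fintype.card (Bool × Bool) = 4 := by simp
  rw [hBB]
  have h2 : (n - 3) * (n - 3) - (n - 3) = (n - 3) * (n - 4) := by
    have h3 : n - 4 = (n - 3) - 1 := by omega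
    rw [h3]
    cases hk : n - 3 with
    | zero => simp
    | succ t => simp [Nat.mul_succ, Nat.succ_sub_one]
  rw [h2]
  ring

end Counting

end Stmt6Aux

theorem stmt_6 (n : ℕ) (heven : Even n) (hn : 4 ≤ n) (Q : Finset (Finset (Fin n)))
    (hQ3 : ∀ T ∈ Q, T.card = 3) (hdet : Determines Q) :
    (n - 2).choose 3 ≤ 8 * Q.card := by
  classical
  obtain ⟨m, hm⟩ := heven
  rcases Nat.lt_or_ge n 6 with hsmall | h6
  · have h0 : n - 2 < 3 := by omega
    rw [Nat.choose_eq_zero_of_lt h0]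
    exact Nat.zero_le _
  have hm3 : 3 ≤ m := by omega
  -- ## The key degree lemma coming from the adversary construction
  have key : ∀ u v p1 p2 : Fin n, v ≠ u → p1 ≠ u → p1 ≠ v → p2 ≠ u → p2 ≠ v → p2 ≠ p1 →
      m - 2 ≤ (Stmt6Aux.AdjS Q u v p1 p2).card := by
    intro u v p1 p2 hvu hp1u hp1v hp2u hp2v hp21
    by_contra hcon
    push_neg at hcon
    have hmemv : v ∈ Finset.univ.erase u := Finset.mem_erase.mpr ⟨hvu, Finset.mem_univ v⟩
    have hmemp1 : p1 ∈ (Finset.univ.erase u).erase v :=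
      Finset.mem_erase.mpr ⟨hp1v, Finset.mem_erase.mpr ⟨hp1u, Finset.mem_univ p1⟩⟩
    have hmemp2 : p2 ∈ ((Finset.univ.erase u).erase v).erase p1 :=
      Finset.mem_erase.mpr ⟨hp21, Finset.mem_erase.mpr ⟨hp2v,
        Finset.mem_erase.mpr ⟨hp2u, Finset.mem_univ p2⟩⟩⟩
    set others := (((Finset.univ.erase u).erase v).erase p1).erase p2 with hoth
    have hoc : others.card = n - 4 := by
      rw [hoth, Finset.card_erase_of_mem hmemp2, Finset.card_erase_of_mem hmemp1,
        Finset.card_erase_of_mem hmemv, Finset.card_erase_of_mem (Finset.mem_univ u),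
        Finset.card_univ, Fintype.card_fin]
      omega
    have hsplit := Finset.card_filter_add_card_filter_not
      (s := others) (p := fun b => Stmt6Aux.DJ Q u v p1 p2 b)
    have d1 : u ≠ v := hvu.symm
    have d2 : u ≠ p1 := hp1u.symm
    have d3 : u ≠ p2 := hp2u.symm
    have d4 : v ≠ p1 := hp1v.symm
    have d5 : v ≠ p2 := hp2v.symm
    have d6 : p1 ≠ p2 := hp21.symm
    have hAdjeq : Stmt6Aux.AdjS Q u v p1 p2
        = others.filter (fun b => Stmt6Aux.DJ Q u v p1 p2 b) := by
      ext b
      rw [Stmt6Aux.AdjS, Finset.mem_filter]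
      simp only [Stmt6Aux.AdjS, Stmt6Aux.Dst, Finset.mem_filter, Finset.mem_univ, true_and,
        hoth, Finset.mem_erase, and_true, Finset.mem_coe, Finset.coe_filter, Set.mem_setOf_eq]
      tauto
    have hNB : m - 1 ≤ (others.filter (fun b => ¬ Stmt6Aux.DJ Q u v p1 p2 b)).card := by
      rw [hAdjeq] at hcon
      omega
    obtain ⟨B, hBsub, hBcard⟩ := Finset.exists_subset_card_eq hNB
    have hBmem : ∀ b ∈ B, (b ≠ p2 ∧ b ≠ p1 ∧ b ≠ v ∧ b ≠ u) ∧
        ¬ Stmt6Aux.DJ Q u v p1 p2 b := by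
      intro b hb
      have h := hBsub hb
      simp only [Finset.mem_filter, hoth, Finset.mem_erase, Finset.mem_univ, and_true] at h
      tauto
    refine Stmt6Aux.adversary m hm Q hQ3 u v p1 p2 d1 d2 d3 d4 d5 d6 B hBcard
      ?_ ?_ ?_ ?_ ?_ hdet
    · intro hu; exact ((hBmem u hu).1.2.2.2) rfl
    · intro hv2; exact ((hBmem v hv2).1.2.2.1) rfl
    · intro hp; exact ((hBmem p1 hp).1.2.1) rfl
    · intro hp; exact ((hBmem p2 hp).1.1) rfl
    · intro b hb
      have hdj := (hBmem b hb).2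
      unfold Stmt6Aux.DJ at hdj
      push_neg at hdj
      exact ⟨hdj.1, hdj.2.1, hdj.2.2.1, hdj.2.2.2⟩
  -- ## lower bound for the nested sum
  have lvl1 : ∀ u v p1 : Fin n, v ∈ Finset.univ.erase u → p1 ∈ (Finset.univ.erase u).erase v →
      (n - 3) * (m - 2) ≤ ∑ p2 ∈ ((Finset.univ.erase u).erase v).erase p1,
        (Stmt6Aux.AdjS Q u v p1 p2).card := by
    intro u v p1 hv hp1
    have hcu : (Finset.univ.erase u).card = n - 1 := by
      rw [Finset.card_erase_of_mem (Finset.mem_univ u), Finset.card_univ, Fintype.card_fin]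
    have hcv : ((Finset.univ.erase u).erase v).card = n - 2 := by
      rw [Finset.card_erase_of_mem hv, hcu]; omega
    have hcp : (((Finset.univ.erase u).erase v).erase p1).card = n - 3 := by
      rw [Finset.card_erase_of_mem hp1, hcv]; omega
    rw [← hcp, ← smul_eq_mul]
    apply Finset.card_nsmul_le_sum
    intro p2 hp2
    obtain ⟨hvu, -⟩ := Finset.mem_erase.mp hv
    obtain ⟨hp1v, hp1r⟩ := Finset.mem_erase.mp hp1
    obtain ⟨hp1u, -⟩ := Finset.mem_erase.mp hp1r
    obtain ⟨hp21, hp2r⟩ := Finset.mem_erase.mp hp2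
    obtain ⟨hp2v, hp2r2⟩ := Finset.mem_erase.mp hp2r
    obtain ⟨hp2u, -⟩ := Finset.mem_erase.mp hp2r2
    exact key u v p1 p2 hvu hp1u hp1v hp2u hp2v hp21
  have lvl2 : ∀ u v : Fin n, v ∈ Finset.univ.erase u →
      (n - 2) * ((n - 3) * (m - 2)) ≤ ∑ p1 ∈ (Finset.univ.erase u).erase v,
        ∑ p2 ∈ ((Finset.univ.erase u).erase v).erase p1, (Stmt6Aux.AdjS Q u v p1 p2).card := by
    intro u v hv
    have hcu : (Finset.univ.erase u).card = n - 1 := by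
      rw [Finset.card_erase_of_mem (Finset.mem_univ u), Finset.card_univ, Fintype.card_fin]
    have hcv : ((Finset.univ.erase u).erase v).card = n - 2 := by
      rw [Finset.card_erase_of_mem hv, hcu]; omega
    rw [← hcv, ← smul_eq_mul]
    apply Finset.card_nsmul_le_sum
    intro p1 hp1
    exact lvl1 u v p1 hv hp1
  have lvl3 : ∀ u : Fin n,
      (n - 1) * ((n - 2) * ((n - 3) * (m - 2))) ≤ ∑ v ∈ Finset.univ.erase u,
        ∑ p1 ∈ (Finset.univ.erase u).erase v,
        ∑ p2 ∈ ((Finset.univ.erase u).erase v).erase p1, (Stmt6Aux.AdjS Q u v p1 p2).card := by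
    intro u
    have hcu : (Finset.univ.erase u).card = n - 1 := by
      rw [Finset.card_erase_of_mem (Finset.mem_univ u), Finset.card_univ, Fintype.card_fin]
    rw [← hcu, ← smul_eq_mul]
    apply Finset.card_nsmul_le_sum
    intro v hv
    exact lvl2 u v hv
  have low : n * ((n - 1) * ((n - 2) * ((n - 3) * (m - 2)))) ≤
      ∑ u : Fin n, ∑ v ∈ Finset.univ.erase u, ∑ p1 ∈ (Finset.univ.erase u).erase v,
        ∑ p2 ∈ ((Finset.univ.erase u).erase v).erase p1, (Stmt6Aux.AdjS Q u v p1 p2).card := by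
    calc n * ((n - 1) * ((n - 2) * ((n - 3) * (m - 2))))
        = (Finset.univ : Finset (Fin n)).card • ((n - 1) * ((n - 2) * ((n - 3) * (m - 2)))) := by
          rw [Finset.card_univ, Fintype.card_fin, smul_eq_mul]
      _ ≤ _ := Finset.card_nsmul_le_sum _ _ _ (fun u _ => lvl3 u)
  -- ## enlarge index sets to full universe
  have up1 : (∑ u : Fin n, ∑ v ∈ Finset.univ.erase u, ∑ p1 ∈ (Finset.univ.erase u).erase v,
        ∑ p2 ∈ ((Finset.univ.erase u).erase v).erase p1, (Stmt6Aux.AdjS Q u v p1 p2).card)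
      ≤ ∑ u : Fin n, ∑ v : Fin n, ∑ p1 : Fin n, ∑ p2 : Fin n,
        (Stmt6Aux.AdjS Q u v p1 p2).card := by
    apply Finset.sum_le_sum
    intro u _
    calc (∑ v ∈ Finset.univ.erase u, ∑ p1 ∈ (Finset.univ.erase u).erase v,
          ∑ p2 ∈ ((Finset.univ.erase u).erase v).erase p1, (Stmt6Aux.AdjS Q u v p1 p2).card)
        ≤ ∑ v ∈ Finset.univ.erase u, ∑ p1 : Fin n, ∑ p2 : Fin n,
            (Stmt6Aux.AdjS Q u v p1 p2).card := by
          apply Finset.sum_le_sum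
          intro v _
          calc (∑ p1 ∈ (Finset.univ.erase u).erase v,
                ∑ p2 ∈ ((Finset.univ.erase u).erase v).erase p1,
                  (Stmt6Aux.AdjS Q u v p1 p2).card)
              ≤ ∑ p1 ∈ (Finset.univ.erase u).erase v, ∑ p2 : Fin n,
                  (Stmt6Aux.AdjS Q u v p1 p2).card := by
                apply Finset.sum_le_sum
                intro p1 _
                exact Finset.sum_le_sum_of_subset (Finset.subset_univ _)
            _ ≤ ∑ p1 : Fin n, ∑ p2 : Fin n, (Stmt6Aux.AdjS Q u v p1 p2).card :=
                Finset.sum_le_sum_of_subset (Finset.subset_univ _)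
      _ ≤ ∑ v : Fin n, ∑ p1 : Fin n, ∑ p2 : Fin n, (Stmt6Aux.AdjS Q u v p1 p2).card :=
          Finset.sum_le_sum_of_subset (Finset.subset_univ _)
  -- ## bound via queries
  have up2 : (∑ u : Fin n, ∑ v : Fin n, ∑ p1 : Fin n, ∑ p2 : Fin n,
        (Stmt6Aux.AdjS Q u v p1 p2).card)
      ≤ ∑ u : Fin n, ∑ v : Fin n, ∑ p1 : Fin n, ∑ p2 : Fin n,
        ∑ T ∈ Q, (Stmt6Aux.WS T u v p1 p2).card := by
    refine Finset.sum_le_sum fun u _ => Finset.sum_le_sum fun v _ =>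
      Finset.sum_le_sum fun p1 _ => Finset.sum_le_sum fun p2 _ => ?_
    exact Stmt6Aux.AdjS_le_sum_WS Q u v p1 p2
  have hswap : (∑ u : Fin n, ∑ v : Fin n, ∑ p1 : Fin n, ∑ p2 : Fin n,
        ∑ T ∈ Q, (Stmt6Aux.WS T u v p1 p2).card)
      = ∑ T ∈ Q, ∑ u : Fin n, ∑ v : Fin n, ∑ p1 : Fin n, ∑ p2 : Fin n,
        (Stmt6Aux.WS T u v p1 p2).card := by
    calc (∑ u : Fin n, ∑ v : Fin n, ∑ p1 : Fin n, ∑ p2 : Fin n,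
          ∑ T ∈ Q, (Stmt6Aux.WS T u v p1 p2).card)
        = ∑ u : Fin n, ∑ v : Fin n, ∑ p1 : Fin n, ∑ T ∈ Q, ∑ p2 : Fin n,
            (Stmt6Aux.WS T u v p1 p2).card :=
          Finset.sum_congr rfl fun u _ => Finset.sum_congr rfl fun v _ =>
            Finset.sum_congr rfl fun p1 _ => Finset.sum_comm
      _ = ∑ u : Fin n, ∑ v : Fin n, ∑ T ∈ Q, ∑ p1 : Fin n, ∑ p2 : Fin n,
            (Stmt6Aux.WS T u v p1 p2).card :=
          Finset.sum_congr rfl fun u _ => Finset.sum_congr rfl fun v _ => Finset.sum_comm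
      _ = ∑ u : Fin n, ∑ T ∈ Q, ∑ v : Fin n, ∑ p1 : Fin n, ∑ p2 : Fin n,
            (Stmt6Aux.WS T u v p1 p2).card :=
          Finset.sum_congr rfl fun u _ => Finset.sum_comm
      _ = ∑ T ∈ Q, ∑ u : Fin n, ∑ v : Fin n, ∑ p1 : Fin n, ∑ p2 : Fin n,
            (Stmt6Aux.WS T u v p1 p2).card := Finset.sum_comm
  have up3 : (∑ T ∈ Q, ∑ u : Fin n, ∑ v : Fin n, ∑ p1 : Fin n, ∑ p2 : Fin n,
        (Stmt6Aux.WS T u v p1 p2).card) ≤ Q.card * (24 * ((n - 3) * (n - 4))) := by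
    calc (∑ T ∈ Q, ∑ u : Fin n, ∑ v : Fin n, ∑ p1 : Fin n, ∑ p2 : Fin n,
          (Stmt6Aux.WS T u v p1 p2).card)
        ≤ ∑ _T ∈ Q, 24 * ((n - 3) * (n - 4)) := by
          refine Finset.sum_le_sum fun T hT => ?_
          rw [Stmt6Aux.sum_WS_eq_card_KT]
          exact Stmt6Aux.KT_bound (by omega) T (hQ3 T hT)
      _ = Q.card * (24 * ((n - 3) * (n - 4))) := by rw [Finset.sum_const, smul_eq_mul]
  have main : n * ((n - 1) * ((n - 2) * ((n - 3) * (m - 2))))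
      ≤ Q.card * (24 * ((n - 3) * (n - 4))) :=
    le_trans low (le_trans up1 (le_trans up2 (le_trans (le_of_eq hswap) up3)))
  -- ## final arithmetic
  have hm24 : n - 4 = 2 * (m - 2) := by omega
  have h48 : (n * ((n - 1) * (n - 2))) * ((n - 3) * (n - 4))
      ≤ (48 * Q.card) * ((n - 3) * (n - 4)) := by
    calc (n * ((n - 1) * (n - 2))) * ((n - 3) * (n - 4))
        = (n * ((n - 1) * ((n - 2) * ((n - 3) * (m - 2))))) * 2 := by rw [hm24]; ring
      _ ≤ (Q.card * (24 * ((n - 3) * (n - 4)))) * 2 := Nat.mul_le_mul_right 2 main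
      _ = (48 * Q.card) * ((n - 3) * (n - 4)) := by ring
  have hpos : 0 < (n - 3) * (n - 4) := Nat.mul_pos (by omega) (by omega)
  have hABC : n * ((n - 1) * (n - 2)) ≤ 48 * Q.card := Nat.le_of_mul_le_mul_right h48 hpos
  have hdesc : (n - 2) * ((n - 3) * (n - 4)) ≤ 48 * Q.card :=
    le_trans (Nat.mul_le_mul (by omega) (Nat.mul_le_mul (by omega) (by omega))) hABC
  have hch : (n - 2).choose 3 * 6 = (n - 2) * ((n - 3) * (n - 4)) := by
    rw [Nat.choose_eq_descFactorial_div_factorial]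
    have hdvd := Nat.factorial_dvd_descFactorial (n - 2) 3
    have hfact : Nat.factorial 3 = 6 := by decide
    rw [hfact] at hdvd ⊢
    rw [Nat.div_mul_cancel hdvd]
    have e1 : n - 2 - 2 = n - 4 := by omega
    have e2 : n - 2 - 1 = n - 3 := by omega
    simp [Nat.descFactorial, e1, e2]
    ring
  have hfin : (n - 2).choose 3 * 6 ≤ (8 * Q.card) * 6 := by
    rw [hch]
    have h8 : (8 * Q.card) * 6 = 48 * Q.card := by ring
    rw [h8]
    exact hdesc
  exact Nat.le_of_mul_le_mul_right hfin (by norm_num)
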